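/- Let n ≥ 4 and let 𝒜 = 2^[n] ∖ {[1], [n]}, the family of all subsets of [n] except {1} and [n] itself. Then |𝒜| = 2^n − 2, 𝒜 ∩ 𝒜 = 2^[n] ∖ {[n]}, 𝒜 ∪ 𝒜 = 2^[n] ∖ {[1]}, and both 𝒜 ∩ 𝒜 and 𝒜 ∪ 𝒜 have VC dimension exactly n − 1. -/

import Mathlib

/-- A set `Y` is shattered by the family `F` if every subset of `Y`
is the trace of some member of `F` on `Y`. -/
def Shatters {α : Type*} [DecidableEq α] (F : Finset (Finset α)) (Y : Finset α) : Prop :=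
  ∀ T ⊆ Y, ∃ S ∈ F, S ∩ Y = T

/-- The VC dimension of a family: the largest cardinality of a shattered set. -/
noncomputable def vcDim {α : Type*} [DecidableEq α] (F : Finset (Finset α)) : ℕ :=
  sSup {m | ∃ Y : Finset α, Shatters F Y ∧ Y.card = m}

/-- `S₁ △ S₂ △ ⋯ △ S_k` for a `k`-tuple of sets. -/
def symmDiffAll {α : Type*} [DecidableEq α] {k : ℕ} (f : Fin k → Finset α) : Finset α :=
  (List.ofFn f).foldr symmDiff ∅

/-- The `k`-fold symmetric difference family `△𝒜^k`. -/
def symmDiffFam {α : Type*} [DecidableEq α] (k : ℕ) (A : Finset (Finset α)) :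
    Finset (Finset α) :=
  (Fintype.piFinset fun _ : Fin k => A).image symmDiffAll

/-- The family `𝒜₁ △ ⋯ △ 𝒜ₖ`. -/
def symmDiffFamMulti {α : Type*} [DecidableEq α] {k : ℕ} (A : Fin k → Finset (Finset α)) :
    Finset (Finset α) :=
  (Fintype.piFinset A).image symmDiffAll

/-- A family is `k`-wise `(n-d)`-union if any `k` of its members have union of size `≤ d`. -/
def KwiseUnion {α : Type*} [DecidableEq α] (k d : ℕ) (A : Finset (Finset α)) : Prop :=
  ∀ f : Fin k → Finset α, (∀ i, f i ∈ A) → (Finset.univ.sup f).card ≤ d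

/-- The `i`-compression of a family. -/
def compress {α : Type*} [DecidableEq α] (i : α) (A : Finset (Finset α)) :
    Finset (Finset α) :=
  A.image fun S => if S ∈ A ∧ S.erase i ∈ A then S else S.erase i

/-- The `(i,j)`-shift of a family. -/
def shiftIJ {α : Type*} [DecidableEq α] (i j : α) (A : Finset (Finset α)) :
    Finset (Finset α) :=
  A.image fun S => if i ∉ S ∧ j ∈ S ∧ insert i (S.erase j) ∉ A then insert i (S.erase j) else S

/-- `p(n,k,d)`: the maximum size of a `k`-wise `(n-d)`-union family on `[n]`. -/
noncomputable def pMax (n k d : ℕ) : ℕ :=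
  sSup {m | ∃ F : Finset (Finset (Fin n)), KwiseUnion k d F ∧ F.card = m}

section Aux

lemma vc_no_univ (n : ℕ) (hn : 1 ≤ n) :
    vcDim ((Finset.univ : Finset (Finset (Fin n))) \ {(Finset.univ : Finset (Fin n))}) =
      n - 1 := by
  unfold vcDim
  have hset : {m | ∃ Y : Finset (Fin n),
      Shatters (Finset.univ \ {(Finset.univ : Finset (Fin n))}) Y ∧ Y.card = m} =
      Set.Iic (n - 1) := by
    ext m
    simp only [Set.mem_setOf_eq, Set.mem_Iic]
    constructor
    · rintro ⟨Y, hY, rfl⟩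
      have hle : Y.card ≤ n := by
        simpa using Finset.card_le_univ Y
      have hne : Y.card ≠ n := by
        intro h
        have hYuniv : Y = Finset.univ := by
          apply Finset.eq_univ_of_card
          simpa using h
        obtain ⟨S, hS, hSY⟩ := hY Y (subset_refl Y)
        rw [hYuniv] at hSY
        rw [Finset.inter_univ] at hSY
        subst hSY
        simp [hYuniv] at hS
      omega
    · intro hm
      obtain ⟨Y, _, hYcard⟩ := Finset.exists_subset_card_eq (s := (Finset.univ : Finset (Fin n))) (n := m)
        (by simpa using (by omega : m ≤ n))
      refine ⟨Y, ?_, hYcard⟩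
      intro T hT
      refine ⟨T, ?_, Finset.inter_eq_left.mpr hT⟩
      simp only [Finset.mem_sdiff, Finset.mem_univ, Finset.mem_singleton, true_and]
      intro h
      have : T.card = n := by rw [h]; simp
      have : T.card ≤ m := hYcard ▸ Finset.card_le_card hT
      omega
  rw [hset, csSup_Iic]

lemma vc_no_singleton (n : ℕ) (hn : 2 ≤ n) (z : Fin n) :
    vcDim ((Finset.univ : Finset (Finset (Fin n))) \ {({z} : Finset (Fin n))}) = n - 1 := by
  unfold vcDim
  have hset : {m | ∃ Y : Finset (Fin n),
      Shatters (Finset.univ \ {({z} : Finset (Fin n))}) Y ∧ Y.card = m} =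
      Set.Iic (n - 1) := by
    ext m
    simp only [Set.mem_setOf_eq, Set.mem_Iic]
    constructor
    · rintro ⟨Y, hY, rfl⟩
      have hle : Y.card ≤ n := by simpa using Finset.card_le_univ Y
      have hne : Y.card ≠ n := by
        intro h
        have hYuniv : Y = Finset.univ := by
          apply Finset.eq_univ_of_card; simpa using h
        obtain ⟨S, hS, hSY⟩ := hY {z} (by simp [hYuniv])
        rw [hYuniv, Finset.inter_univ] at hSY
        subst hSY
        simp at hS
      omega
    · intro hm
      obtain ⟨Y, _, hYcard⟩ := Finset.exists_subset_card_eq (s := (Finset.univ : Finset (Fin n))) (n := m)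
        (by simpa using (by omega : m ≤ n))
      refine ⟨Y, ?_, hYcard⟩
      intro T hT
      by_cases hTz : T = {z}
      · -- T = {z}; pick x ∉ Y
        have hzY : z ∈ Y := hT (by simp [hTz])
        have hYne : Y ≠ Finset.univ := by
          intro h
          have : Y.card = n := by rw [h]; simp
          omega
        obtain ⟨x, hx⟩ : ∃ x, x ∉ Y := by
          by_contra h
          push_neg at h
          exact hYne (Finset.eq_univ_iff_forall.mpr h)
        refine ⟨{x, z}, ?_, ?_⟩
        · simp only [Finset.mem_sdiff, Finset.mem_univ, Finset.mem_singleton, true_and]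
          intro h
          have : x ∈ ({z} : Finset (Fin n)) := h ▸ (by simp : x ∈ ({x, z} : Finset (Fin n)))
          simp only [Finset.mem_singleton] at this
          exact hx (this ▸ hzY)
        · rw [hTz]
          ext t
          simp only [Finset.mem_inter, Finset.mem_insert, Finset.mem_singleton]
          constructor
          · rintro ⟨h1 | h1, h2⟩
            · exact absurd (h1 ▸ h2) hx
            · exact h1
          · rintro rfl; exact ⟨Or.inr rfl, hzY⟩
      · refine ⟨T, ?_, Finset.inter_eq_left.mpr hT⟩
        simp [hTz]
  rw [hset, csSup_Iic]

lemma statement17_aux (n : ℕ) (hn : 4 ≤ n) (z : Fin n) :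
    ((Finset.univ : Finset (Finset (Fin n))) \
          {({z} : Finset (Fin n)), (Finset.univ : Finset (Fin n))}).card =
        2 ^ n - 2 ∧
      Finset.image₂ (fun S T => S ∩ T)
          ((Finset.univ : Finset (Finset (Fin n))) \
            {({z} : Finset (Fin n)), (Finset.univ : Finset (Fin n))})
          ((Finset.univ : Finset (Finset (Fin n))) \
            {({z} : Finset (Fin n)), (Finset.univ : Finset (Fin n))}) =
        (Finset.univ : Finset (Finset (Fin n))) \ {(Finset.univ : Finset (Fin n))} ∧
      Finset.image₂ (fun S T => S ∪ T)
          ((Finset.univ : Finset (Finset (Fin n))) \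
            {({z} : Finset (Fin n)), (Finset.univ : Finset (Fin n))})
          ((Finset.univ : Finset (Finset (Fin n))) \
            {({z} : Finset (Fin n)), (Finset.univ : Finset (Fin n))}) =
        (Finset.univ : Finset (Finset (Fin n))) \ {({z} : Finset (Fin n))} ∧
      vcDim
          (Finset.image₂ (fun S T => S ∩ T)
            ((Finset.univ : Finset (Finset (Fin n))) \
              {({z} : Finset (Fin n)), (Finset.univ : Finset (Fin n))})
            ((Finset.univ : Finset (Finset (Fin n))) \
              {({z} : Finset (Fin n)), (Finset.univ : Finset (Fin n))})) =
        n - 1 ∧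
      vcDim
          (Finset.image₂ (fun S T => S ∪ T)
            ((Finset.univ : Finset (Finset (Fin n))) \
              {({z} : Finset (Fin n)), (Finset.univ : Finset (Fin n))})
            ((Finset.univ : Finset (Finset (Fin n))) \
              {({z} : Finset (Fin n)), (Finset.univ : Finset (Fin n))})) =
        n - 1 := by
  have hzu : ({z} : Finset (Fin n)) ≠ Finset.univ := by
    intro h
    have := congrArg Finset.card h
    simp at this
    omega
  have hmemA : ∀ S : Finset (Fin n),
      S ∉ ({({z} : Finset (Fin n)), Finset.univ} : Finset (Finset (Fin n))) ↔
        S ≠ {z} ∧ S ≠ Finset.univ := by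
    intro S
    simp [not_or]
  -- part 2 : intersections
  have hinter : Finset.image₂ (fun S T => S ∩ T)
      ((Finset.univ : Finset (Finset (Fin n))) \
        {({z} : Finset (Fin n)), (Finset.univ : Finset (Fin n))})
      ((Finset.univ : Finset (Finset (Fin n))) \
        {({z} : Finset (Fin n)), (Finset.univ : Finset (Fin n))}) =
      (Finset.univ : Finset (Finset (Fin n))) \ {(Finset.univ : Finset (Fin n))} := by
    ext S
    simp only [Finset.mem_image₂, Finset.mem_sdiff, Finset.mem_univ, Finset.mem_singleton,
      true_and]
    constructor
    · rintro ⟨a, ha, b, hb, rfl⟩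
      rw [hmemA] at ha hb
      intro h
      have : a = Finset.univ := by
        apply Finset.eq_univ_of_forall
        intro x
        have : x ∈ a ∩ b := by rw [h]; exact Finset.mem_univ x
        exact (Finset.mem_inter.mp this).1
      exact ha.2 this
    · intro hS
      by_cases hz : S = {z}
      · -- S = {z} = {z,x} ∩ {z,y}
        have hcard : 1 < (Finset.univ.erase z).card := by
          rw [Finset.card_erase_of_mem (Finset.mem_univ z)]
          simp; omega
        obtain ⟨x, hx, y, hy, hxy⟩ := Finset.one_lt_card.mp hcard
        rw [Finset.mem_erase] at hx hy
        have hcard2 : ∀ w : Fin n, w ≠ z → ({z, w} : Finset (Fin n)) ∉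
            ({({z} : Finset (Fin n)), Finset.univ} : Finset (Finset (Fin n))) := by
          intro w hw
          rw [hmemA]
          constructor
          · intro h
            have : w ∈ ({z} : Finset (Fin n)) := h ▸ (by simp)
            exact hw (by simpa using this)
          · intro h
            have := congrArg Finset.card h
            have hc : ({z, w} : Finset (Fin n)).card = 2 := by
              rw [Finset.card_insert_of_notMem (by simp [Ne.symm hw])]; simp
            rw [hc] at this
            simp at this
            omega
        refine ⟨{z, x}, ?_, {z, y}, ?_, ?_⟩
        · exact hcard2 x hx.1
        · exact hcard2 y hy.1
        · rw [hz]
          ext t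
          simp only [Finset.mem_inter, Finset.mem_insert, Finset.mem_singleton]
          constructor
          · rintro ⟨h1 | h1, h2 | h2⟩ <;> first | exact h1 | (subst h1; subst h2; exact absurd rfl hxy) | exact h2
          · rintro rfl; exact ⟨Or.inl rfl, Or.inl rfl⟩
      · exact ⟨S, by rw [hmemA]; exact ⟨hz, hS⟩, S, by rw [hmemA]; exact ⟨hz, hS⟩,
          Finset.inter_self S⟩
  -- part 3 : unions
  have hunion : Finset.image₂ (fun S T => S ∪ T)
      ((Finset.univ : Finset (Finset (Fin n))) \
        {({z} : Finset (Fin n)), (Finset.univ : Finset (Fin n))})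
      ((Finset.univ : Finset (Finset (Fin n))) \
        {({z} : Finset (Fin n)), (Finset.univ : Finset (Fin n))}) =
      (Finset.univ : Finset (Finset (Fin n))) \ {({z} : Finset (Fin n))} := by
    ext S
    simp only [Finset.mem_image₂, Finset.mem_sdiff, Finset.mem_univ, Finset.mem_singleton,
      true_and]
    constructor
    · rintro ⟨a, ha, b, hb, rfl⟩
      rw [hmemA] at ha hb
      intro h
      have hz : z ∈ a ∪ b := by rw [h]; simp
      rcases Finset.mem_union.mp hz with hza | hzb
      · have : a = {z} := by
          apply Finset.Subset.antisymm
          · intro t ht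
            have : t ∈ a ∪ b := Finset.mem_union_left _ ht
            rw [h] at this; exact this
          · intro t ht
            simp only [Finset.mem_singleton] at ht
            exact ht ▸ hza
        exact ha.1 this
      · have : b = {z} := by
          apply Finset.Subset.antisymm
          · intro t ht
            have : t ∈ a ∪ b := Finset.mem_union_right _ ht
            rw [h] at this; exact this
          · intro t ht
            simp only [Finset.mem_singleton] at ht
            exact ht ▸ hzb
        exact hb.1 this
    · intro hS
      by_cases hu : S = Finset.univ
      · -- univ = erase x ∪ erase y for x ≠ y
        have hcard : 1 < (Finset.univ : Finset (Fin n)).card := by simp; omega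
        obtain ⟨x, -, y, -, hxy⟩ := Finset.one_lt_card.mp hcard
        have hmem : ∀ w : Fin n, (Finset.univ.erase w) ∉
            ({({z} : Finset (Fin n)), Finset.univ} : Finset (Finset (Fin n))) := by
          intro w
          rw [hmemA]
          constructor
          · intro h
            have := congrArg Finset.card h
            rw [Finset.card_erase_of_mem (Finset.mem_univ w)] at this
            simp at this
            omega
          · intro h
            have := Finset.notMem_erase w (Finset.univ : Finset (Fin n))
            rw [h] at this
            exact this (Finset.mem_univ w)
        refine ⟨Finset.univ.erase x, hmem x, Finset.univ.erase y, hmem y, ?_⟩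
        rw [hu]
        ext t
        simp only [Finset.mem_union, Finset.mem_erase, Finset.mem_univ, and_true, iff_true]
        rcases eq_or_ne t x with rfl | h
        · exact Or.inr hxy
        · exact Or.inl h
      · exact ⟨S, by rw [hmemA]; exact ⟨hS, hu⟩, S, by rw [hmemA]; exact ⟨hS, hu⟩,
          Finset.union_self S⟩
  refine ⟨?_, hinter, hunion, ?_, ?_⟩
  · rw [Finset.card_sdiff_of_subset (Finset.subset_univ _), Finset.card_univ, Fintype.card_finset,
      Fintype.card_fin, Finset.card_insert_of_notMem (by simpa using hzu),
      Finset.card_singleton]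
  · rw [hinter]; exact vc_no_univ n (by omega)
  · rw [hunion]; exact vc_no_singleton n (by omega) z

end Aux

/-- for `n ≥ 4` and `𝒜 = 2^[n] ∖ {{1}, [n]}`: `|𝒜| = 2^n − 2`,
`𝒜 ∩ 𝒜 = 2^[n] ∖ {[n]}`, `𝒜 ∪ 𝒜 = 2^[n] ∖ {{1}}`, and both `𝒜 ∩ 𝒜` and `𝒜 ∪ 𝒜`
have VC dimension exactly `n − 1`.  (Here the element `1 ∈ [n]` is `⟨0, _⟩ : Fin n`.) -/
theorem statement17 (n : ℕ) (hn : 4 ≤ n) :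
    ((Finset.univ : Finset (Finset (Fin n))) \
          {({⟨0, by omega⟩} : Finset (Fin n)), (Finset.univ : Finset (Fin n))}).card =
        2 ^ n - 2 ∧
      Finset.image₂ (fun S T => S ∩ T)
          ((Finset.univ : Finset (Finset (Fin n))) \
            {({⟨0, by omega⟩} : Finset (Fin n)), (Finset.univ : Finset (Fin n))})
          ((Finset.univ : Finset (Finset (Fin n))) \
            {({⟨0, by omega⟩} : Finset (Fin n)), (Finset.univ : Finset (Fin n))}) =
        (Finset.univ : Finset (Finset (Fin n))) \ {(Finset.univ : Finset (Fin n))} ∧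
      Finset.image₂ (fun S T => S ∪ T)
          ((Finset.univ : Finset (Finset (Fin n))) \
            {({⟨0, by omega⟩} : Finset (Fin n)), (Finset.univ : Finset (Fin n))})
          ((Finset.univ : Finset (Finset (Fin n))) \
            {({⟨0, by omega⟩} : Finset (Fin n)), (Finset.univ : Finset (Fin n))}) =
        (Finset.univ : Finset (Finset (Fin n))) \ {({⟨0, by omega⟩} : Finset (Fin n))} ∧
      vcDim
          (Finset.image₂ (fun S T => S ∩ T)
            ((Finset.univ : Finset (Finset (Fin n))) \
              {({⟨0, by omega⟩} : Finset (Fin n)), (Finset.univ : Finset (Fin n))})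
            ((Finset.univ : Finset (Finset (Fin n))) \
              {({⟨0, by omega⟩} : Finset (Fin n)), (Finset.univ : Finset (Fin n))})) =
        n - 1 ∧
      vcDim
          (Finset.image₂ (fun S T => S ∪ T)
            ((Finset.univ : Finset (Finset (Fin n))) \
              {({⟨0, by omega⟩} : Finset (Fin n)), (Finset.univ : Finset (Fin n))})
            ((Finset.univ : Finset (Finset (Fin n))) \
              {({⟨0, by omega⟩} : Finset (Fin n)), (Finset.univ : Finset (Fin n))})) =
        n - 1 := by
  exact statement17_aux n hn _
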